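/- Let A be an abelian category and let f : A ⟶ B, g : A ⟶ C, h : B ⟶ D, k : C ⟶ D form a commutative quadrangle (f ≫ h = g ≫ k). Then the quadrangle is a pullback if and only if the induced morphism on kernels kernel g ⟶ kernel h is an isomorphism and the induced morphism on cokernels cokernel g ⟶ cokernel h is a monomorphism. -/
import Mathlib


open CategoryTheory CategoryTheory.Limits

/-- A commutative quadrangle `(f, g, h, k)` (with `f ≫ h = g ≫ k`) in an abelian category is a
*weak square* if its diagonal sequence `A ⟶ B ⊞ C ⟶ D`, with first morphism `biprod.lift f g`
and second morphism `biprod.desc h (-k)`, is exact at `B ⊞ C`. -/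
def IsWeakSquare {A : Type*} [Category A] [Abelian A] {W X Y Z : A}
    (f : W ⟶ X) (g : W ⟶ Y) (h : X ⟶ Z) (k : Y ⟶ Z) : Prop :=
  ∃ w : biprod.lift f g ≫ biprod.desc h (-k) = 0,
    (ShortComplex.mk (biprod.lift f g) (biprod.desc h (-k)) w).Exact

/-- A commutative quadrangle is a *pullback* if it is a weak square and the first morphism
`biprod.lift f g` of its diagonal sequence is a monomorphism. -/
def IsPullbackSquare {A : Type*} [Category A] [Abelian A] {W X Y Z : A}
    (f : W ⟶ X) (g : W ⟶ Y) (h : X ⟶ Z) (k : Y ⟶ Z) : Prop :=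
  IsWeakSquare f g h k ∧ Mono (biprod.lift f g)

/-- A commutative quadrangle is a pullback if and only if the induced morphism on kernels
`kernel g ⟶ kernel h` is an isomorphism and the induced morphism on cokernels
`cokernel g ⟶ cokernel h` is a monomorphism. -/
theorem pullback_iff_isIso_kernelMap_and_mono_cokernelMap
    {A : Type*} [Category A] [Abelian A] {W X Y Z : A}
    (f : W ⟶ X) (g : W ⟶ Y) (h : X ⟶ Z) (k : Y ⟶ Z) (comm : f ≫ h = g ≫ k) :
    IsPullbackSquare f g h k ↔
      (IsIso (kernel.lift h (kernel.ι g ≫ f)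
          (by rw [Category.assoc, comm, ← Category.assoc, kernel.condition, zero_comp])) ∧
       Mono (cokernel.desc g (k ≫ cokernel.π h)
          (by rw [← Category.assoc, ← comm, Category.assoc, cokernel.condition, comp_zero]))) := by
  set κ : kernel g ⟶ kernel h := kernel.lift h (kernel.ι g ≫ f)
    (by rw [Category.assoc, comm, ← Category.assoc, kernel.condition, zero_comp]) with hκdef
  set δ : cokernel g ⟶ cokernel h := cokernel.desc g (k ≫ cokernel.π h)
    (by rw [← Category.assoc, ← comm, Category.assoc, cokernel.condition, comp_zero]) with hδdef
  have hκι : κ ≫ kernel.ι h = kernel.ι g ≫ f := by simp [hκdef]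
  have hπδ : cokernel.π g ≫ δ = k ≫ cokernel.π h := by simp [hδdef]
  have w : biprod.lift f g ≫ biprod.desc h (-k) = 0 := by
    simp [comm]
  -- exactness of g ≫ cokernel.π g and h ≫ cokernel.π h
  have hSg : (ShortComplex.mk g (cokernel.π g) (cokernel.condition g)).Exact :=
    ShortComplex.exact_of_g_is_cokernel _ (cokernelIsCokernel g)
  have hSh : (ShortComplex.mk h (cokernel.π h) (cokernel.condition h)).Exact :=
    ShortComplex.exact_of_g_is_cokernel _ (cokernelIsCokernel h)
  constructor
  · rintro ⟨⟨w', hex⟩, hmono⟩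
    constructor
    · -- κ is an isomorphism
      have hm : Mono κ := by
        rw [Preadditive.mono_iff_cancel_zero]
        intro T a ha
        have h1 : a ≫ kernel.ι g ≫ f = 0 := by
          rw [← hκι, ← Category.assoc, ha, zero_comp]
        have h2 : (a ≫ kernel.ι g) ≫ biprod.lift f g = 0 := by
          apply biprod.hom_ext <;> simp [h1]
        have h3 : a ≫ kernel.ι g = 0 := by
          haveI := hmono
          exact zero_of_comp_mono _ h2
        exact zero_of_comp_mono (kernel.ι g) h3
      have he : Epi κ := by
        rw [epi_iff_surjective_up_to_refinements]
        intro T b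
        have hm0 : (biprod.lift (b ≫ kernel.ι h) 0 : T ⟶ X ⊞ Y) ≫ biprod.desc h (-k) = 0 := by
          simp [kernel.condition]
        obtain ⟨T', π, hπ, a, fac⟩ := hex.exact_up_to_refinements _ hm0
        have hfst : π ≫ b ≫ kernel.ι h = a ≫ f := by
          simpa using fac =≫ biprod.fst
        have hsnd : a ≫ g = 0 := by
          have := fac =≫ biprod.snd
          simpa using this.symm
        refine ⟨T', π, hπ, kernel.lift g a hsnd, ?_⟩
        apply (cancel_mono (kernel.ι h)).1
        rw [Category.assoc, Category.assoc, hκι, kernel.lift_ι_assoc]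
        exact hfst
      exact isIso_of_mono_of_epi κ
    · -- δ is mono
      rw [Preadditive.mono_iff_cancel_zero]
      intro T c hc
      obtain ⟨T₁, e₁, he₁, y, hy⟩ := surjective_up_to_refinements_of_epi (cokernel.π g) c
      have h1 : (y ≫ k) ≫ cokernel.π h = 0 := by
        have : y ≫ cokernel.π g ≫ δ = 0 := by
          rw [← Category.assoc, ← hy, Category.assoc, hc, comp_zero]
        rw [Category.assoc, ← hπδ, this]
      obtain ⟨T₂, e₂, he₂, x, hx⟩ := hSh.exact_up_to_refinements (y ≫ k) h1
      have hm0 : (biprod.lift x (e₂ ≫ y) : T₂ ⟶ X ⊞ Y) ≫ biprod.desc h (-k) = 0 := by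
        simp only [biprod.lift_desc, Preadditive.comp_neg]
        rw [← hx]
        simp
      obtain ⟨T₃, e₃, he₃, a, fac⟩ := hex.exact_up_to_refinements _ hm0
      have hsnd : e₃ ≫ e₂ ≫ y = a ≫ g := by
        simpa using fac =≫ biprod.snd
      have : (e₃ ≫ e₂ ≫ e₁) ≫ c = 0 := by
        have h3 : (e₃ ≫ e₂ ≫ y) ≫ cokernel.π g = 0 := by
          rw [hsnd, Category.assoc, cokernel.condition, comp_zero]
        simp only [Category.assoc] at h3 ⊢
        rw [hy, h3]
      exact zero_of_epi_comp _ this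
  · rintro ⟨hκ, hδ⟩
    have hmono : Mono (biprod.lift f g) := by
      rw [Preadditive.mono_iff_cancel_zero]
      intro T a ha
      have hf : a ≫ f = 0 := by simpa using ha =≫ biprod.fst
      have hg : a ≫ g = 0 := by simpa using ha =≫ biprod.snd
      have hfac : kernel.lift g a hg ≫ kernel.ι g = a := kernel.lift_ι _ _ _
      have h1 : kernel.lift g a hg ≫ κ = 0 := by
        rw [← cancel_mono (kernel.ι h)]
        rw [Category.assoc, hκι, ← Category.assoc, hfac, hf, zero_comp]
      have h2 : kernel.lift g a hg = 0 := zero_of_comp_mono κ h1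
      rw [← hfac, h2, zero_comp]
    refine ⟨⟨w, ?_⟩, hmono⟩
    rw [ShortComplex.exact_iff_exact_up_to_refinements]
    intro T m hm
    set x : T ⟶ X := m ≫ biprod.fst with hxdef
    set y : T ⟶ Y := m ≫ biprod.snd with hydef
    have hmxy : m = biprod.lift x y := by apply biprod.hom_ext <;> simp [hxdef, hydef]
    have hxy : x ≫ h = y ≫ k := by
      have : x ≫ h + y ≫ (-k) = 0 := by
        rw [hmxy] at hm
        simpa using hm
      rw [Preadditive.comp_neg] at this
      linear_combination (norm := abel) this
    have h1 : (y ≫ cokernel.π g) ≫ δ = 0 := by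
      rw [Category.assoc, hπδ, ← Category.assoc, ← hxy, Category.assoc,
        cokernel.condition, comp_zero]
    have h2 : y ≫ cokernel.π g = 0 := zero_of_comp_mono δ h1
    obtain ⟨T', e, he, a, hae⟩ := hSg.exact_up_to_refinements y h2
    -- hae : e ≫ y = a ≫ g
    have hx' : (e ≫ x - a ≫ f) ≫ h = 0 := by
      have h4 : (e ≫ x) ≫ h = (a ≫ f) ≫ h := by
        rw [Category.assoc, hxy, ← Category.assoc, hae, Category.assoc, ← comm,
          ← Category.assoc]
      rw [Preadditive.sub_comp, h4, sub_self]
    set b : T' ⟶ kernel h := kernel.lift h _ hx' with hbdef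
    have hbι : b ≫ kernel.ι h = e ≫ x - a ≫ f := kernel.lift_ι _ _ _
    haveI := hκ
    set a' : T' ⟶ kernel g := b ≫ inv κ with ha'def
    have ha'κ : a' ≫ κ = b := by simp [ha'def]
    have ha'f : a' ≫ kernel.ι g ≫ f = e ≫ x - a ≫ f := by
      rw [← hκι, ← Category.assoc, ha'κ, hbι]
    refine ⟨T', e, he, a + a' ≫ kernel.ι g, ?_⟩
    apply biprod.hom_ext
    · have : (a + a' ≫ kernel.ι g) ≫ f = e ≫ x := by
        rw [Preadditive.add_comp, Category.assoc, ha'f]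
        abel
      simpa [hxdef] using this.symm
    · have : (a + a' ≫ kernel.ι g) ≫ g = e ≫ y := by
        rw [Preadditive.add_comp, Category.assoc, kernel.condition, comp_zero,
          add_zero, hae]
      simpa [hydef] using this.symm
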